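/- Let k ∈ ℂ and let α : ℂ → ℂ be analytic at z with α'(z) ≠ 0. Then −(k+1)·(deriv (fun w => w + k·α(w)/α'(w)) z)·α'(z)² = k·(k+1)·α(z)·α''(z) − (k+1)²·α'(z)²; that is, −(k+1)·φ_α'·(α')² equals the second Rankin–Cohen bracket [α,α]₂ of α with itself (both factors of weight k). -/

import Mathlib

/-- The paper's identity `−(k+1)·(φ_α')·(α')² = [α,α]₂` determining the critical
points of the weight-`k` φ-operator, where
`[α,α]₂ = k·(k+1)·α·α'' − (k+1)²·(α')²` is the second Rankin–Cohen bracket. -/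
theorem phi_critical_points
    (k : ℂ) (α : ℂ → ℂ) (z : ℂ)
    (hα : AnalyticAt ℂ α z) (hα' : deriv α z ≠ 0) :
    -(k + 1) * deriv (fun w => w + k * α w / deriv α w) z * (deriv α z) ^ 2
      = k * (k + 1) * α z * deriv (deriv α) z - (k + 1) ^ 2 * (deriv α z) ^ 2 := by
  have h1 : DifferentiableAt ℂ α z := hα.differentiableAt
  have h2 : DifferentiableAt ℂ (deriv α) z := by
    have : AnalyticAt ℂ (fun w => fderiv ℂ α w 1) z :=
      ((ContinuousLinearMap.apply ℂ ℂ (1 : ℂ)).analyticAt _).comp hα.fderiv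
    exact this.differentiableAt
  have hnum : DifferentiableAt ℂ (fun w => k * α w) z := h1.const_mul k
  have hdiv : DifferentiableAt ℂ (fun w => k * α w / deriv α w) z := hnum.div h2 hα'
  have hD : deriv (fun w => w + k * α w / deriv α w) z
      = 1 + (k * deriv α z * deriv α z - k * α z * deriv (deriv α) z) / (deriv α z) ^ 2 := by
    rw [deriv_fun_add (differentiableAt_fun_id) hdiv, deriv_id'', deriv_fun_div hnum h2 hα',
      deriv_const_mul _ h1]
  rw [hD]
  field_simp
  ring
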